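/- arXiv:0911.0440 — 5 statements merged into one kernel-verified Lean document; each statement's English description precedes it below -/
import Mathlib

section
/- Let A be an open convex subset of a finite-dimensional real inner product space V, and let f : A → ℝ be strictly convex with a minimum point x̄ ∈ A. Then for every ε > 0 there exists δ > 0 such that for every p ∈ V with ‖p‖ < δ, the function f_p(x) := f(x) − ⟨p, x⟩ admits a unique minimum point x̄_p on A, and ‖x̄_p − x̄‖ < ε. -/
open scoped RealInnerProductSpace

theorem stmt_0 {V : Type*} [NormedAddCommGroup V] [InnerProductSpace ℝ V]
    [FiniteDimensional ℝ V] {A : Set V} (hA : IsOpen A) (hAconv : Convex ℝ A)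
    {f : V → ℝ} (hf : StrictConvexOn ℝ A f)
    {xbar : V} (hxbar : xbar ∈ A) (hmin : ∀ x ∈ A, f xbar ≤ f x) :
    ∀ ε > 0, ∃ δ > 0, ∀ p : V, ‖p‖ < δ →
      ∃ xp, (xp ∈ A ∧ (∀ x ∈ A, f xp - ⟪p, xp⟫ ≤ f x - ⟪p, x⟫) ∧ ‖xp - xbar‖ < ε) ∧
        ∀ y, y ∈ A → (∀ x ∈ A, f y - ⟪p, y⟫ ≤ f x - ⟪p, x⟫) → y = xp := by
  intro ε hε
  -- trivial case: subsingleton V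
  rcases subsingleton_or_nontrivial V with hV | hV
  · refine ⟨1, one_pos, fun p _ => ⟨xbar, ⟨hxbar, fun x hx => ?_, by simp [hε, Subsingleton.elim (xbar - xbar) 0]⟩, fun y hy _ => Subsingleton.elim y xbar⟩⟩
    · have : x = xbar := Subsingleton.elim x xbar
      simp [this]
  -- strict minimality at xbar
  have hstrict : ∀ x ∈ A, x ≠ xbar → f xbar < f x := by
    intro x hx hne
    have hmid : (1/2 : ℝ) • xbar + (1/2 : ℝ) • x ∈ A :=
      hAconv hxbar hx (by norm_num) (by norm_num) (by norm_num)
    have h1 := hf.2 hxbar hx (Ne.symm hne) (by norm_num : (0:ℝ) < 1/2)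
      (by norm_num : (0:ℝ) < 1/2) (by norm_num)
    have h2 := hmin _ hmid
    simp only [smul_eq_mul] at h1
    linarith
  -- choose radius r > 0 with closedBall xbar r ⊆ A and r < ε
  obtain ⟨r0, hr0, hball⟩ := Metric.isOpen_iff.mp hA xbar hxbar
  set r : ℝ := min (r0 / 2) (ε / 2) with hr_def
  have hrpos : 0 < r := lt_min (by linarith) (by linarith)
  have hsub : Metric.closedBall xbar r ⊆ A := by
    intro x hx
    apply hball
    have : dist x xbar ≤ r := Metric.mem_closedBall.mp hx
    exact Metric.mem_ball.mpr (lt_of_le_of_lt this (lt_of_le_of_lt (min_le_left _ _) (by linarith)))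
  have hrε : r < ε := lt_of_le_of_lt (min_le_right _ _) (by linarith)
  -- continuity of f on A
  have hcont : ContinuousOn f A := hf.convexOn.continuousOn hA
  -- minimum of f on the sphere
  obtain ⟨z, hzS, hzmin⟩ := (isCompact_sphere xbar r).exists_isMinOn
    (NormedSpace.sphere_nonempty.mpr hrpos.le)
    (hcont.mono (Metric.sphere_subset_closedBall.trans hsub))
  have hzA : z ∈ A := hsub (Metric.sphere_subset_closedBall hzS)
  have hzne : z ≠ xbar := by
    intro h
    have := Metric.mem_sphere.mp hzS
    rw [h] at this; simp at this; linarith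
  have hm : 0 < f z - f xbar := sub_pos.mpr (hstrict z hzA hzne)
  refine ⟨(f z - f xbar) / r, div_pos hm hrpos, fun p hp => ?_⟩
  -- the perturbed function
  set g : V → ℝ := fun x => f x - ⟪p, x⟫ with hg_def
  have hgcont : ContinuousOn g A :=
    hcont.sub ((innerSL ℝ p).continuous.continuousOn)
  -- convexity of the linear perturbation
  have hlin : ConvexOn ℝ A (fun x => -⟪p, x⟫) := by
    refine ⟨hAconv, fun x _ y _ a b ha hb hab => le_of_eq ?_⟩
    simp [inner_add_right, real_inner_smul_right]
    ring
  have hgconv : ConvexOn ℝ A g := by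
    have := hf.convexOn.add hlin
    have heq : g = f + fun x => -⟪p, x⟫ := by
      funext x; simp only [hg_def, Pi.add_apply, sub_eq_add_neg]
    rw [heq]; exact this
  have hgstrict : StrictConvexOn ℝ A g := by
    have := hf.add_convexOn hlin
    have heq : g = f + fun x => -⟪p, x⟫ := by
      funext x; simp only [hg_def, Pi.add_apply, sub_eq_add_neg]
    rw [heq]; exact this
  -- min of g on the closed ball
  obtain ⟨xp, hxpB, hxpmin⟩ := (isCompact_closedBall xbar r).exists_isMinOn
    ⟨xbar, Metric.mem_closedBall_self hrpos.le⟩ (hgcont.mono hsub)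
  have hxbarB : xbar ∈ Metric.closedBall xbar r := Metric.mem_closedBall_self hrpos.le
  -- on the sphere, g > g xbar
  have hsphere : ∀ x ∈ Metric.sphere xbar r, g xbar < g x := by
    intro x hxS
    have hxnorm : ‖x - xbar‖ = r := by
      rw [← dist_eq_norm]; exact Metric.mem_sphere.mp hxS
    have hinner : ⟪p, x - xbar⟫ ≤ ‖p‖ * r := by
      calc ⟪p, x - xbar⟫ ≤ ‖p‖ * ‖x - xbar‖ := real_inner_le_norm p _
        _ = ‖p‖ * r := by rw [hxnorm]
    have hpr : ‖p‖ * r < f z - f xbar := by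
      have := (mul_lt_mul_of_pos_right hp hrpos)
      rwa [div_mul_cancel₀ _ hrpos.ne'] at this
    have hfz : f z ≤ f x := hzmin hxS
    have : ⟪p, x⟫ - ⟪p, xbar⟫ < f z - f xbar := by
      rw [← inner_sub_right]; linarith
    simp only [hg_def]
    linarith
  -- xp is not on the sphere
  have hxp_not_sphere : xp ∉ Metric.sphere xbar r := by
    intro hS
    have h1 := hsphere xp hS
    have h2 := hxpmin hxbarB
    exact absurd h2 (not_le.mpr h1)
  have hxp_ball : xp ∈ Metric.ball xbar r := by
    rcases lt_or_eq_of_le (Metric.mem_closedBall.mp hxpB) with h | h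
    · exact Metric.mem_ball.mpr h
    · exact absurd (Metric.mem_sphere.mp (by exact h : dist xp xbar = r) ▸ h) (fun _ => hxp_not_sphere h)
  have hxpA : xp ∈ A := hsub (Metric.ball_subset_closedBall hxp_ball)
  -- xp is a local min of g on A, hence global by convexity
  have hlocal : IsLocalMinOn g A xp := by
    apply Filter.eventually_inf_principal.mpr
    filter_upwards [hA.mem_nhds hxpA, Metric.ball_mem_nhds xp (by
      have := Metric.mem_ball.mp hxp_ball
      linarith [sub_pos.mpr this] : (0:ℝ) < r - dist xp xbar)] with x hxA hxb _
    have hxB : x ∈ Metric.closedBall xbar r := by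
      have h1 : dist x xp < r - dist xp xbar := Metric.mem_ball.mp hxb
      have := dist_triangle x xp xbar
      exact Metric.mem_closedBall.mpr (by linarith)
    exact hxpmin hxB
  have hglobal : ∀ x ∈ A, g xp ≤ g x :=
    fun x hx => (IsMinOn.of_isLocalMinOn_of_convexOn hxpA hlocal hgconv) hx
  have hdist : ‖xp - xbar‖ < ε := by
    rw [← dist_eq_norm]
    exact lt_trans (Metric.mem_ball.mp hxp_ball) hrε
  refine ⟨xp, ⟨hxpA, hglobal, hdist⟩, ?_⟩
  -- uniqueness
  intro y hy hymin
  by_contra hne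
  have hmid : (1/2 : ℝ) • y + (1/2 : ℝ) • xp ∈ A :=
    hAconv hy hxpA (by norm_num) (by norm_num) (by norm_num)
  have h1 := hgstrict.2 hy hxpA hne (by norm_num : (0:ℝ) < 1/2)
    (by norm_num : (0:ℝ) < 1/2) (by norm_num)
  have h2 := hymin _ hmid
  have h3 := hglobal _ hmid
  have h4 := hymin xp hxpA
  have h5 := hglobal y hy
  simp only [hg_def, smul_eq_mul] at h1 h3 h5
  linarith
end

section
/- Let f : A → ℝ be strictly convex on an open convex subset A of a finite-dimensional normed space, let x̄ ∈ A, and suppose ε > 0 is such that the closed ball of radius ε around x̄ is contained in A and f(x) > f(x̄) for all x on the sphere S(x̄, ε). Then f attains a minimum on the closed ball B̄(x̄, ε) at a point lying in the open ball, and this point is the unique global minimum of f over all of A. -/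
theorem stmt_2 {V : Type*} [NormedAddCommGroup V] [NormedSpace ℝ V]
    [FiniteDimensional ℝ V] {A : Set V} (hA : IsOpen A) (hAconv : Convex ℝ A)
    {f : V → ℝ} (hf : StrictConvexOn ℝ A f) (hfc : ContinuousOn f A)
    {xbar : V} (hxbar : xbar ∈ A) {ε : ℝ} (hε : 0 < ε)
    (hball : Metric.closedBall xbar ε ⊆ A)
    (hsphere : ∀ x ∈ Metric.sphere xbar ε, f xbar < f x) :
    ∃ x₀ ∈ Metric.ball xbar ε,
      (∀ x ∈ Metric.closedBall xbar ε, f x₀ ≤ f x) ∧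
      (∀ x ∈ A, f x₀ ≤ f x) ∧
      ∀ y ∈ A, (∀ x ∈ A, f y ≤ f x) → y = x₀ := by
  have hcomp : IsCompact (Metric.closedBall xbar ε) := isCompact_closedBall _ _
  have hne : (Metric.closedBall xbar ε).Nonempty :=
    ⟨xbar, Metric.mem_closedBall_self hε.le⟩
  obtain ⟨x₀, hx₀mem, hx₀min⟩ := hcomp.exists_isMinOn hne (hfc.mono hball)
  have hfx₀ : f x₀ ≤ f xbar := hx₀min (Metric.mem_closedBall_self hε.le)
  have hx₀ball : x₀ ∈ Metric.ball xbar ε := by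
    rcases lt_or_eq_of_le (Metric.mem_closedBall.mp hx₀mem) with h | h
    · exact Metric.mem_ball.mpr h
    · exact absurd (hsphere x₀ (Metric.mem_sphere.mpr h)) (not_lt.mpr hfx₀)
  have hx₀A : x₀ ∈ A := hball hx₀mem
  have hglobal : ∀ x ∈ A, f x₀ ≤ f x := by
    intro x hx
    by_contra hlt
    push_neg at hlt
    have hxne : x ≠ x₀ := fun h => by simp [h] at hlt
    have hdlt : dist x₀ xbar < ε := Metric.mem_ball.mp hx₀ball
    have hdx : 0 < dist x x₀ := dist_pos.mpr hxne
    set t : ℝ := min (1/2) ((ε - dist x₀ xbar) / (2 * dist x x₀)) with ht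
    have ht0 : 0 < t := lt_min (by norm_num) (div_pos (by linarith) (by positivity))
    have ht1 : t < 1 := lt_of_le_of_lt (min_le_left _ _) (by norm_num)
    set z := (1 - t) • x₀ + t • x with hz
    have hdz : dist z x₀ = t * dist x x₀ := by
      rw [hz, dist_eq_norm]
      have h1 : (1 - t) • x₀ + t • x - x₀ = t • (x - x₀) := by module
      rw [h1, norm_smul, Real.norm_of_nonneg ht0.le, ← dist_eq_norm]
    have htle : t * dist x x₀ ≤ (ε - dist x₀ xbar) / 2 := by
      have hmr := min_le_right (1/2 : ℝ) ((ε - dist x₀ xbar) / (2 * dist x x₀))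
      calc t * dist x x₀ ≤ ((ε - dist x₀ xbar) / (2 * dist x x₀)) * dist x x₀ :=
            mul_le_mul_of_nonneg_right hmr dist_nonneg
        _ = (ε - dist x₀ xbar) / 2 := by field_simp
    have hzball : z ∈ Metric.closedBall xbar ε := by
      have htri := dist_triangle z x₀ xbar
      simp only [Metric.mem_closedBall]
      linarith
    have hconv := hf.convexOn.2 hx₀A hx (by linarith : (0:ℝ) ≤ 1 - t) ht0.le
      (by ring : (1 - t) + t = 1)
    have hzf : f z < f x₀ := by
      calc f z ≤ (1 - t) * f x₀ + t * f x := hconv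
        _ < (1 - t) * f x₀ + t * f x₀ := by nlinarith
        _ = f x₀ := by ring
    exact absurd (hx₀min hzball) (not_le.mpr hzf)
  refine ⟨x₀, hx₀ball, hx₀min, hglobal, ?_⟩
  intro y hy hymin
  by_contra hne'
  have heq : f y = f x₀ := le_antisymm (hymin x₀ hx₀A) (hglobal y hy)
  have hmA : (1/2 : ℝ) • y + (1/2 : ℝ) • x₀ ∈ A :=
    hAconv hy hx₀A (by norm_num) (by norm_num) (by norm_num)
  have hm := hf.2 hy hx₀A hne' (by norm_num : (0:ℝ) < 1/2) (by norm_num : (0:ℝ) < 1/2)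
    (by norm_num)
  have := hglobal _ hmA
  rw [heq] at hm
  simp only [smul_eq_mul] at hm
  linarith
end

section
/- Let V, W be finite-dimensional real inner product spaces, A ⊆ V open convex, and J : A × W → ℝ given by J(x, σ) = f(x) + ⟨x, L(σ)⟩ where f : A → ℝ is strictly convex and L : W → V is linear. Suppose for every σ ∈ W the function x ↦ J(x, σ) has a (necessarily unique) minimum point Λ(σ). Then the map σ ↦ Λ(σ) is continuous. -/
open scoped RealInnerProductSpace

theorem stmt_4 {V W : Type*} [NormedAddCommGroup V] [InnerProductSpace ℝ V]
    [FiniteDimensional ℝ V] [NormedAddCommGroup W] [InnerProductSpace ℝ W]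
    [FiniteDimensional ℝ W] {A : Set V} (hA : IsOpen A) (hAconv : Convex ℝ A)
    {f : V → ℝ} (hf : StrictConvexOn ℝ A f) (L : W →ₗ[ℝ] V)
    (Λ : W → V) (hΛ : ∀ σ : W, Λ σ ∈ A ∧
      ∀ x ∈ A, f (Λ σ) + ⟪Λ σ, L σ⟫ ≤ f x + ⟪x, L σ⟫) :
    Continuous Λ := by
  rcases subsingleton_or_nontrivial V with hV | hV
  · have : Λ = fun _ => Λ 0 := funext fun σ => Subsingleton.elim _ _
    rw [this]; exact continuous_const
  -- strict convexity of x ↦ f x + ⟪x, L σ⟫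
  have hgconv : ∀ σ : W, StrictConvexOn ℝ A (fun x => f x + ⟪x, L σ⟫) := by
    intro σ
    refine hf.add_convexOn ⟨hAconv, fun x _ y _ a b ha hb hab => le_of_eq ?_⟩
    simp only [smul_eq_mul]
    rw [inner_add_left, real_inner_smul_left, real_inner_smul_left]
  have hfc : ContinuousOn f A := hf.convexOn.continuousOn hA
  rw [Metric.continuous_iff]
  intro σ₀ δ hδ
  obtain ⟨x₀A, hmin⟩ := hΛ σ₀
  set x₀ := Λ σ₀ with hx₀
  obtain ⟨r, hr, hball⟩ := Metric.isOpen_iff.mp hA x₀ x₀A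
  set r' : ℝ := min (r / 2) (δ / 2) with hr'def
  have hr' : 0 < r' := lt_min (by linarith) (by linarith)
  have hball' : Metric.closedBall x₀ r' ⊆ A := fun x hx =>
    hball (Metric.closedBall_subset_ball (by
      have := min_le_left (r / 2) (δ / 2); linarith) hx)
  have hsubA : Metric.sphere x₀ r' ⊆ A := fun x hx =>
    hball' (Metric.sphere_subset_closedBall hx)
  -- min of g σ₀ on the sphere
  have hsph : (Metric.sphere x₀ r').Nonempty := NormedSpace.sphere_nonempty.mpr hr'.le
  have hcont : ContinuousOn (fun x => f x + ⟪x, L σ₀⟫) (Metric.sphere x₀ r') :=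
    (hfc.mono hsubA).add ((continuous_id.inner continuous_const).continuousOn)
  obtain ⟨y₀, hy₀S, hy₀min⟩ := (isCompact_sphere x₀ r').exists_isMinOn hsph hcont
  have hy₀A : y₀ ∈ A := hsubA hy₀S
  have hy₀ne : y₀ ≠ x₀ := by
    intro h
    have : dist y₀ x₀ = r' := hy₀S
    rw [h, dist_self] at this; linarith
  -- strict gap ε
  have hstrict : f x₀ + ⟪x₀, L σ₀⟫ < f y₀ + ⟪y₀, L σ₀⟫ := by
    rcases lt_or_eq_of_le (hmin y₀ hy₀A) with h | h
    · exact h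
    · exfalso
      have hmid := (hgconv σ₀).2 hy₀A x₀A hy₀ne (by norm_num : (0:ℝ) < 1/2)
        (by norm_num : (0:ℝ) < 1/2) (by norm_num)
      have hmem : (1/2 : ℝ) • y₀ + (1/2 : ℝ) • x₀ ∈ A :=
        hAconv hy₀A x₀A (by norm_num) (by norm_num) (by norm_num)
      have := hmin _ hmem
      simp only [smul_eq_mul] at hmid
      linarith
  set ε : ℝ := (f y₀ + ⟪y₀, L σ₀⟫) - (f x₀ + ⟪x₀, L σ₀⟫) with hεdef
  have hε : 0 < ε := by simp only [hεdef]; linarith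
  set M : ℝ := ‖x₀‖ + r' with hMdef
  have hM : 0 < M := by positivity
  -- neighborhood where perturbation is small
  have hLc : Continuous fun σ : W => M * ‖L σ - L σ₀‖ := by
    have hL := L.continuous_of_finiteDimensional
    exact continuous_const.mul ((hL.sub continuous_const).norm)
  have hev : ∀ᶠ σ in nhds σ₀, M * ‖L σ - L σ₀‖ < ε / 3 := by
    have ht := hLc.tendsto σ₀
    simp only [sub_self, norm_zero, mul_zero] at ht
    exact ht.eventually_lt_const (by linarith)
  obtain ⟨δ', hδ', hδ'prop⟩ := Metric.eventually_nhds_iff.mp hev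
  refine ⟨δ', hδ', fun σ hσ => ?_⟩
  have hpert : ∀ x ∈ Metric.closedBall x₀ r', |⟪x, L σ⟫ - ⟪x, L σ₀⟫| ≤ ε / 3 := by
    intro x hx
    have h1 : ⟪x, L σ⟫ - ⟪x, L σ₀⟫ = ⟪x, L σ - L σ₀⟫ := by rw [inner_sub_right]
    rw [h1]
    have h2 : |⟪x, L σ - L σ₀⟫| ≤ ‖x‖ * ‖L σ - L σ₀‖ := abs_real_inner_le_norm _ _
    have hxM : ‖x‖ ≤ M := by
      have := mem_closedBall_iff_norm.mp hx
      calc ‖x‖ = ‖x - x₀ + x₀‖ := by rw [sub_add_cancel]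
        _ ≤ ‖x - x₀‖ + ‖x₀‖ := norm_add_le _ _
        _ ≤ M := by rw [hMdef]; linarith
    have h3 : ‖x‖ * ‖L σ - L σ₀‖ ≤ M * ‖L σ - L σ₀‖ :=
      mul_le_mul_of_nonneg_right hxM (norm_nonneg _)
    have h4 := hδ'prop hσ
    exact le_trans h2 (le_of_lt (lt_of_le_of_lt h3 h4))
  -- main argument: Λ σ is inside the ball of radius r'
  have hclose : dist (Λ σ) x₀ < r' := by
    by_contra hcon
    push_neg at hcon
    set d : ℝ := dist (Λ σ) x₀ with hddef
    have hd : 0 < d := lt_of_lt_of_le hr' hcon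
    set t : ℝ := r' / d with htdef
    have ht0 : 0 < t := div_pos hr' hd
    have ht1 : t ≤ 1 := (div_le_one hd).mpr hcon
    set y : V := x₀ + t • (Λ σ - x₀) with hydef
    have hyS : y ∈ Metric.sphere x₀ r' := by
      simp only [mem_sphere_iff_norm, hydef, add_sub_cancel_left, norm_smul,
        Real.norm_eq_abs, abs_of_pos ht0]
      rw [htdef]
      have : ‖Λ σ - x₀‖ = d := by rw [hddef, dist_eq_norm]
      rw [this]; field_simp
    have hyA : y ∈ A := hsubA hyS
    have hyconv : y = (1 - t) • x₀ + t • Λ σ := by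
      rw [hydef]; module
    obtain ⟨hΛσA, hminσ⟩ := hΛ σ
    have hconvle : f y + ⟪y, L σ⟫ ≤ (1 - t) * (f x₀ + ⟪x₀, L σ⟫) + t * (f (Λ σ) + ⟪Λ σ, L σ⟫) := by
      have := (hgconv σ).convexOn.2 x₀A hΛσA (by linarith : (0:ℝ) ≤ 1 - t) ht0.le
        (by ring : (1 - t) + t = 1)
      rw [hyconv]
      simpa using this
    have hΛle : f (Λ σ) + ⟪Λ σ, L σ⟫ ≤ f x₀ + ⟪x₀, L σ⟫ := hminσ x₀ x₀A
    have hyle : f y + ⟪y, L σ⟫ ≤ f x₀ + ⟪x₀, L σ⟫ := by nlinarith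
    -- lower bound on g σ y
    have hy₀le : f y₀ + ⟪y₀, L σ₀⟫ ≤ f y + ⟪y, L σ₀⟫ := hy₀min hyS
    have hp1 := hpert y (Metric.sphere_subset_closedBall hyS)
    have hp2 := hpert x₀ (Metric.mem_closedBall_self hr'.le)
    have hl1 := abs_le.mp hp1
    have hl2 := abs_le.mp hp2
    simp only [hεdef] at hl1 hl2 hε ⊢
    linarith [hl1.1, hl2.2]
  calc dist (Λ σ) (Λ σ₀) = dist (Λ σ) x₀ := by rw [hx₀]
    _ < r' := hclose
    _ ≤ δ / 2 := min_le_right _ _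
    _ < δ := by linarith
end

section
/- Let Γ : C(𝕋; H(m)) → H(n) be the linear operator Γ(Φ) = (1/2π)∫₀^{2π} G(e^{iθ}) Φ(e^{iθ}) G(e^{iθ})* dθ, where G(z) = (zI − A)⁻¹B. Then a Hermitian matrix X ∈ H(n) is orthogonal to the range of Γ (with respect to the trace inner product) if and only if G(e^{iθ})* X G(e^{iθ}) = 0 for all θ ∈ [0, 2π]. -/
open Matrix MeasureTheory

/-- Transfer function G(e^{iθ}) = (e^{iθ}I − A)⁻¹ B. -/
noncomputable def Gtf {n m : ℕ} (A : Matrix (Fin n) (Fin n) ℂ)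
    (B : Matrix (Fin n) (Fin m) ℂ) (θ : ℝ) : Matrix (Fin n) (Fin m) ℂ :=
  (Complex.exp (θ * Complex.I) • (1 : Matrix (Fin n) (Fin n) ℂ) - A)⁻¹ * B

/-- Γ(Φ) = (1/2π) ∫₀^{2π} G Φ G* dθ, computed entrywise. -/
noncomputable def GammaOp {n m : ℕ} (A : Matrix (Fin n) (Fin n) ℂ)
    (B : Matrix (Fin n) (Fin m) ℂ) (Φ : ℝ → Matrix (Fin m) (Fin m) ℂ) :
    Matrix (Fin n) (Fin n) ℂ := fun i j =>
  (∫ θ in (0:ℝ)..(2 * Real.pi), ((Gtf A B θ) * (Φ θ) * (Gtf A B θ)ᴴ) i j) /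
    (2 * Real.pi)

lemma Gtf_det_ne {n : ℕ} (A : Matrix (Fin n) (Fin n) ℂ)
    (hstab : ∀ z : ℂ, (A - z • (1 : Matrix (Fin n) (Fin n) ℂ)).det = 0 → ‖z‖ < 1)
    (θ : ℝ) :
    (Complex.exp (θ * Complex.I) • (1 : Matrix (Fin n) (Fin n) ℂ) - A).det ≠ 0 := by
  intro h
  have h2 : (A - Complex.exp (θ * Complex.I) • (1 : Matrix (Fin n) (Fin n) ℂ)).det = 0 := by
    have : A - Complex.exp (θ * Complex.I) • (1 : Matrix (Fin n) (Fin n) ℂ)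
        = -(Complex.exp (θ * Complex.I) • (1 : Matrix (Fin n) (Fin n) ℂ) - A) := by
      rw [neg_sub]
    rw [this, Matrix.det_neg, h, mul_zero]
  have hlt := hstab _ h2
  have habs : ‖Complex.exp (θ * Complex.I)‖ = 1 := by
    rw [Complex.norm_exp]; simp
  rw [habs] at hlt
  exact lt_irrefl 1 hlt

lemma Gtf_continuous {n m : ℕ} (A : Matrix (Fin n) (Fin n) ℂ) (B : Matrix (Fin n) (Fin m) ℂ)
    (hstab : ∀ z : ℂ, (A - z • (1 : Matrix (Fin n) (Fin n) ℂ)).det = 0 → ‖z‖ < 1) :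
    Continuous (Gtf A B) := by
  have hM : Continuous fun θ : ℝ =>
      Complex.exp (θ * Complex.I) • (1 : Matrix (Fin n) (Fin n) ℂ) - A := by
    exact ((Complex.continuous_exp.comp
      (Complex.continuous_ofReal.mul continuous_const)).smul continuous_const).sub
      continuous_const
  have hinv : Continuous fun θ : ℝ =>
      (Complex.exp (θ * Complex.I) • (1 : Matrix (Fin n) (Fin n) ℂ) - A)⁻¹ := by
    simp_rw [Matrix.inv_def, Ring.inverse_eq_inv']
    exact (hM.matrix_det.inv₀ (Gtf_det_ne A hstab)).smul hM.matrix_adjugate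
  exact hinv.matrix_mul continuous_const

lemma Gtf_periodic {n m : ℕ} (A : Matrix (Fin n) (Fin n) ℂ) (B : Matrix (Fin n) (Fin m) ℂ) :
    Function.Periodic (Gtf A B) (2 * Real.pi) := by
  intro θ
  have hexp : Complex.exp ((↑(θ + 2 * Real.pi) : ℂ) * Complex.I)
      = Complex.exp ((θ : ℂ) * Complex.I) := by
    push_cast
    rw [add_mul, Complex.exp_add, Complex.exp_two_pi_mul_I, mul_one]
  simp only [Gtf, hexp]

lemma trace_expand {n : ℕ} (M X : Matrix (Fin n) (Fin n) ℂ) :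
    (M * X).trace = ∑ i, ∑ j, M i j * X j i := by
  simp [Matrix.trace, Matrix.diag, Matrix.mul_apply]

lemma integral_sum_mul {n : ℕ} (F : ℝ → Matrix (Fin n) (Fin n) ℂ)
    (X : Matrix (Fin n) (Fin n) ℂ) (a b : ℝ) (hF : Continuous F) :
    (∫ θ in a..b, ∑ i, ∑ j, F θ i j * X j i)
      = ∑ i, ∑ j, (∫ θ in a..b, F θ i j) * X j i := by
  have hc : ∀ (i j : Fin n), Continuous fun θ => F θ i j * X j i :=
    fun i j => (hF.matrix_elem i j).mul continuous_const
  rw [intervalIntegral.integral_finset_sum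
    (f := fun i θ => ∑ j, F θ i j * X j i)
    (fun i _ => ((continuous_finset_sum _ fun j _ => hc i j).intervalIntegrable _ _))]
  refine Finset.sum_congr rfl fun i _ => ?_
  rw [intervalIntegral.integral_finset_sum (f := fun j θ => F θ i j * X j i)
    (fun j _ => (hc i j).intervalIntegrable _ _)]
  exact Finset.sum_congr rfl fun j _ => intervalIntegral.integral_mul_const _ _

lemma trace_formula {n m : ℕ} (A : Matrix (Fin n) (Fin n) ℂ) (B : Matrix (Fin n) (Fin m) ℂ)
    (X : Matrix (Fin n) (Fin n) ℂ) (Φ : ℝ → Matrix (Fin m) (Fin m) ℂ)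
    (hF : Continuous fun θ => Gtf A B θ * Φ θ * (Gtf A B θ)ᴴ) :
    (GammaOp A B Φ * X).trace
      = (∫ θ in (0:ℝ)..(2 * Real.pi),
          (Gtf A B θ * Φ θ * (Gtf A B θ)ᴴ * X).trace) / (2 * Real.pi) := by
  rw [trace_expand]
  have h1 : (∫ θ in (0:ℝ)..(2 * Real.pi), (Gtf A B θ * Φ θ * (Gtf A B θ)ᴴ * X).trace)
      = ∑ i, ∑ j, (∫ θ in (0:ℝ)..(2 * Real.pi), (Gtf A B θ * Φ θ * (Gtf A B θ)ᴴ) i j) * X j i := by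
    simp_rw [trace_expand]
    exact integral_sum_mul _ X _ _ hF
  rw [h1]
  simp only [GammaOp, Finset.sum_div]
  refine Finset.sum_congr rfl fun i _ => (Finset.sum_congr rfl fun j _ => ?_)
  rw [div_mul_eq_mul_div]

theorem stmt_6 {n m : ℕ} (A : Matrix (Fin n) (Fin n) ℂ) (B : Matrix (Fin n) (Fin m) ℂ)
    (hstab : ∀ z : ℂ, (A - z • (1 : Matrix (Fin n) (Fin n) ℂ)).det = 0 → ‖z‖ < 1)
    (hB : B.rank = m)
    (hreach : ∀ x : Fin n → ℂ, (∀ k : ℕ, Matrix.vecMul x (A ^ k * B) = 0) → x = 0)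
    (X : Matrix (Fin n) (Fin n) ℂ) (hX : X.IsHermitian) :
    (∀ Φ : ℝ → Matrix (Fin m) (Fin m) ℂ, Continuous Φ →
        Function.Periodic Φ (2 * Real.pi) → (∀ θ, (Φ θ).IsHermitian) →
        ((GammaOp A B Φ) * X).trace = 0) ↔
      (∀ θ : ℝ, (Gtf A B θ)ᴴ * X * Gtf A B θ = 0) := by
  have hGc := Gtf_continuous A B hstab
  have two_pi_pos : (0:ℝ) < 2 * Real.pi := by positivity
  constructor
  · intro h θ₀
    set M : ℝ → Matrix (Fin m) (Fin m) ℂ := fun θ => (Gtf A B θ)ᴴ * X * Gtf A B θ with hMdef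
    have hMc : Continuous M :=
      (hGc.matrix_conjTranspose.matrix_mul continuous_const).matrix_mul hGc
    have hMper : Function.Periodic M (2 * Real.pi) := by
      intro θ; simp only [hMdef, Gtf_periodic A B θ]
    have hMherm : ∀ θ, (M θ).IsHermitian := by
      intro θ
      simp [Matrix.IsHermitian, hMdef, Matrix.conjTranspose_mul, Matrix.mul_assoc, hX.eq]
    have hfc : Continuous fun θ => Gtf A B θ * M θ * (Gtf A B θ)ᴴ :=
      (hGc.matrix_mul hMc).matrix_mul hGc.matrix_conjTranspose
    have h0 := h M hMc hMper hMherm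
    rw [trace_formula A B X M hfc] at h0
    have hint : (∫ θ in (0:ℝ)..(2 * Real.pi),
        (Gtf A B θ * M θ * (Gtf A B θ)ᴴ * X).trace) = 0 := by
      rcases div_eq_zero_iff.mp h0 with h' | h'
      · exact h'
      · exact absurd h' (by exact_mod_cast two_pi_pos.ne')
    set g : ℝ → ℝ := fun θ => ∑ i, ∑ j, Complex.normSq (M θ i j) with hgdef
    have htr : ∀ θ, (Gtf A B θ * M θ * (Gtf A B θ)ᴴ * X).trace = ((g θ : ℝ) : ℂ) := by
      intro θ
      rw [Matrix.mul_assoc (Gtf A B θ * M θ), Matrix.trace_mul_comm, ← Matrix.mul_assoc]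
      have : (Gtf A B θ)ᴴ * X * Gtf A B θ = M θ := rfl
      rw [this, trace_expand]
      simp only [hgdef]
      push_cast
      refine Finset.sum_congr rfl fun i _ => (Finset.sum_congr rfl fun j _ => ?_)
      rw [← (hMherm θ).apply j i]
      rw [mul_comm, Complex.normSq_eq_conj_mul_self]
      rfl
    simp_rw [htr] at hint
    rw [intervalIntegral.integral_ofReal] at hint
    have hgint : (∫ θ in (0:ℝ)..(2 * Real.pi), g θ) = 0 := by exact_mod_cast hint
    have hgc : Continuous g := by
      refine continuous_finset_sum _ fun i _ => continuous_finset_sum _ fun j _ => ?_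
      exact Complex.continuous_normSq.comp (hMc.matrix_elem i j)
    have hgnonneg : ∀ θ, 0 ≤ g θ :=
      fun θ => Finset.sum_nonneg fun i _ => Finset.sum_nonneg fun j _ => Complex.normSq_nonneg _
    have hgae : g =ᵐ[volume.restrict (Set.Ioc (0:ℝ) (2 * Real.pi))] 0 := by
      exact (intervalIntegral.integral_eq_zero_iff_of_le_of_nonneg_ae two_pi_pos.le
        (Filter.Eventually.of_forall hgnonneg) (hgc.intervalIntegrable _ _)).mp hgint
    have hgzero : ∀ θ ∈ Set.Ioc (0:ℝ) (2 * Real.pi), g θ = 0 :=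
      MeasureTheory.Measure.eqOn_Ioc_of_ae_eq volume hgae hgc.continuousOn
        continuous_const.continuousOn
    have hgper : Function.Periodic g (2 * Real.pi) := by
      intro θ; simp only [hgdef, hMper θ]
    have hg0 : g θ₀ = 0 := by
      obtain ⟨y, hy, hxy⟩ := hgper.exists_mem_Ioc two_pi_pos θ₀ 0
      rw [zero_add] at hy
      rw [hxy]
      exact hgzero y hy
    ext i j
    have hle : Complex.normSq (M θ₀ i j) ≤ g θ₀ := by
      refine le_trans ?_ (Finset.single_le_sum
        (f := fun i => ∑ j, Complex.normSq (M θ₀ i j))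
        (fun i _ => Finset.sum_nonneg fun j _ => Complex.normSq_nonneg _)
        (Finset.mem_univ i))
      exact Finset.single_le_sum (fun j _ => Complex.normSq_nonneg _) (Finset.mem_univ j)
    have : Complex.normSq (M θ₀ i j) = 0 :=
      le_antisymm (hg0 ▸ hle) (Complex.normSq_nonneg _)
    simpa using Complex.normSq_eq_zero.mp this
  · intro h Φ hΦc hΦper hΦherm
    have hfc : Continuous fun θ => Gtf A B θ * Φ θ * (Gtf A B θ)ᴴ :=
      (hGc.matrix_mul hΦc).matrix_mul hGc.matrix_conjTranspose
    rw [trace_formula A B X Φ hfc]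
    have hzero : ∀ θ : ℝ, (Gtf A B θ * Φ θ * (Gtf A B θ)ᴴ * X).trace = 0 := by
      intro θ
      rw [Matrix.mul_assoc (Gtf A B θ * Φ θ), Matrix.trace_mul_comm, ← Matrix.mul_assoc,
        h θ, Matrix.zero_mul, Matrix.trace_zero]
    simp [hzero]
end

section
/- The functional J^H_Ψ(Λ) = tr ∫ (I + G*ΛG)⁻¹ Ψ + tr(ΛΣ) is strictly convex on the set L^H_Γ = {Λ ∈ H(n) ∩ Range Γ : I + G(e^{iθ})*ΛG(e^{iθ}) > 0 for all θ}. -/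
set_option linter.unusedSectionVars false
set_option maxHeartbeats 1000000
open Matrix MeasureTheory
open scoped ComplexOrder

section MatrixAux


variable {ι : Type*} [Fintype ι] [DecidableEq ι]


lemma psd_diag_nonneg' {M : Matrix ι ι ℂ} (hM : M.PosSemidef) (i : ι) :
    0 ≤ M i i := by
  exact hM.diag_nonneg

open scoped MatrixOrder in
lemma psd_exists_factor {M : Matrix ι ι ℂ} (hM : M.PosSemidef) :
    ∃ C : Matrix ι ι ℂ, M = Cᴴ * C := by
  obtain ⟨B, hB⟩ := CStarAlgebra.nonneg_iff_eq_star_mul_self.mp hM.nonneg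
  exact ⟨B, hB⟩

lemma psd_trace_nonneg' {M : Matrix ι ι ℂ} (hM : M.PosSemidef) :
    0 ≤ M.trace := by
  rw [Matrix.trace]
  exact Finset.sum_nonneg fun i _ => psd_diag_nonneg' hM i

lemma psd_trace_eq_zero {M : Matrix ι ι ℂ} (hM : M.PosSemidef)
    (h : M.trace = 0) : M = 0 := by
  obtain ⟨C, rfl⟩ := psd_exists_factor hM
  have hC : C = 0 := by
    have hd : ∀ i ∈ Finset.univ, (0:ℂ) ≤ (Cᴴ * C) i i := fun i _ => psd_diag_nonneg' hM i
    have := (Finset.sum_eq_zero_iff_of_nonneg hd).mp h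
    ext i j
    have h2 := this j (Finset.mem_univ j)
    rw [Matrix.mul_apply] at h2
    have hterm : ∀ l ∈ Finset.univ, (0:ℂ) ≤ Cᴴ j l * C l j := by
      intro l _
      simpa [Matrix.conjTranspose_apply] using star_mul_self_nonneg (C l j)
    have := (Finset.sum_eq_zero_iff_of_nonneg hterm).mp h2 i (Finset.mem_univ i)
    rw [Matrix.conjTranspose_apply] at this
    rcases mul_eq_zero.mp this with h' | h'
    · simpa [star_eq_zero] using h'
    · exact h'
  simp [hC]

lemma psd_trace_mul_nonneg {X Y : Matrix ι ι ℂ} (hX : X.PosSemidef)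
    (hY : Y.PosSemidef) : 0 ≤ (X * Y).trace := by
  obtain ⟨C, rfl⟩ := psd_exists_factor hX
  rw [Matrix.mul_assoc, Matrix.trace_mul_comm]
  exact psd_trace_nonneg' (hY.mul_mul_conjTranspose_same C)

lemma herm_smul {a : ℝ} {M : Matrix ι ι ℂ} (hM : M.IsHermitian) :
    (a • M).IsHermitian := by
  have h : (a • M)ᴴ = a • Mᴴ := by
    ext i j; simp [Matrix.conjTranspose_apply, star_smul]
  rw [Matrix.IsHermitian, h, hM.eq]

lemma psd_smul {a : ℝ} (ha : 0 ≤ a) {M : Matrix ι ι ℂ} (hM : M.PosSemidef) :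
    (a • M).PosSemidef := by
  refine .of_dotProduct_mulVec_nonneg (herm_smul hM.1) fun x => ?_
  have h1 : (a • M) *ᵥ x = a • (M *ᵥ x) := by
    ext i; simp [Matrix.mulVec, dotProduct, Finset.smul_sum, smul_mul_assoc, mul_assoc]
  rw [h1]
  have h2 : star x ⬝ᵥ (a • (M *ᵥ x)) = (a:ℂ) * (star x ⬝ᵥ (M *ᵥ x)) := by
    simp [dotProduct, Finset.mul_sum, Complex.real_smul]; ring_nf
    exact Finset.sum_congr rfl fun i _ => by ring
  rw [h2]
  exact mul_nonneg (by exact_mod_cast ha) (hM.dotProduct_mulVec_nonneg x)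

lemma psd_add {M N : Matrix ι ι ℂ} (hM : M.PosSemidef) (hN : N.PosSemidef) :
    (M + N).PosSemidef := by
  refine .of_dotProduct_mulVec_nonneg (hM.1.add hN.1) fun x => ?_
  rw [Matrix.add_mulVec, dotProduct_add]
  exact add_nonneg (hM.dotProduct_mulVec_nonneg x) (hN.dotProduct_mulVec_nonneg x)

lemma pd_add_psd {M N : Matrix ι ι ℂ} (hM : M.PosDef) (hN : N.PosSemidef) :
    (M + N).PosDef := by
  refine .of_dotProduct_mulVec_pos (hM.1.add hN.1) fun x hx => ?_
  rw [Matrix.add_mulVec, dotProduct_add]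
  exact add_pos_of_pos_of_nonneg (hM.dotProduct_mulVec_pos hx) (hN.dotProduct_mulVec_nonneg x)

lemma pd_smul {a : ℝ} (ha : 0 < a) {M : Matrix ι ι ℂ} (hM : M.PosDef) :
    (a • M).PosDef := by
  refine .of_dotProduct_mulVec_pos (herm_smul hM.1) fun x hx => ?_
  have h1 : (a • M) *ᵥ x = a • (M *ᵥ x) := by
    ext i; simp [Matrix.mulVec, dotProduct, Finset.smul_sum, smul_mul_assoc, mul_assoc]
  have h2 : star x ⬝ᵥ (a • (M *ᵥ x)) = (a:ℂ) * (star x ⬝ᵥ (M *ᵥ x)) := by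
    simp [dotProduct, Finset.mul_sum, Complex.real_smul]
    exact Finset.sum_congr rfl fun i _ => by ring
  rw [h1, h2]
  exact mul_pos (by exact_mod_cast ha) (hM.dotProduct_mulVec_pos hx)


-- the midpoint gap S = a•M₁⁻¹ + b•M₂⁻¹ - (a•M₁+b•M₂)⁻¹ is PSD
lemma inv_convex_psd {M₁ M₂ : Matrix ι ι ℂ} (h1 : M₁.PosDef) (h2 : M₂.PosDef)
    {a b : ℝ} (ha : 0 ≤ a) (hb : 0 ≤ b) (hab : a + b = 1)
    (hM : (a • M₁ + b • M₂).PosDef) :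
    (a • M₁⁻¹ + b • M₂⁻¹ - (a • M₁ + b • M₂)⁻¹).PosSemidef := by
  haveI i1 : Invertible M₁ := h1.isUnit.invertible
  haveI i2 : Invertible M₂ := h2.isUnit.invertible
  haveI iM : Invertible (a • M₁ + b • M₂) := hM.isUnit.invertible
  have hK1 : (Matrix.fromBlocks M₁ (1:Matrix ι ι ℂ) (1:Matrix ι ι ℂ) M₁⁻¹).PosSemidef := by
    have := (Matrix.PosDef.fromBlocks₁₁ (1:Matrix ι ι ℂ) M₁⁻¹ h1).mpr
    simp only [Matrix.conjTranspose_one] at this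
    exact this (by simpa using (Matrix.PosSemidef.zero (n := ι) (R := ℂ)))
  have hK2 : (Matrix.fromBlocks M₂ (1:Matrix ι ι ℂ) (1:Matrix ι ι ℂ) M₂⁻¹).PosSemidef := by
    have := (Matrix.PosDef.fromBlocks₁₁ (1:Matrix ι ι ℂ) M₂⁻¹ h2).mpr
    simp only [Matrix.conjTranspose_one] at this
    exact this (by simpa using (Matrix.PosSemidef.zero (n := ι) (R := ℂ)))
  have hsum : a • Matrix.fromBlocks M₁ (1:Matrix ι ι ℂ) 1 M₁⁻¹
      + b • Matrix.fromBlocks M₂ (1:Matrix ι ι ℂ) 1 M₂⁻¹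
      = Matrix.fromBlocks (a • M₁ + b • M₂) 1 1 (a • M₁⁻¹ + b • M₂⁻¹) := by
    have hone : a • (1:Matrix ι ι ℂ) + b • 1 = 1 := by rw [← add_smul, hab, one_smul]
    rw [Matrix.fromBlocks_smul, Matrix.fromBlocks_smul, Matrix.fromBlocks_add, hone]
  have hbig : (Matrix.fromBlocks (a • M₁ + b • M₂) (1:Matrix ι ι ℂ) 1
      (a • M₁⁻¹ + b • M₂⁻¹)).PosSemidef := by
    rw [← hsum]
    exact psd_add (psd_smul ha hK1) (psd_smul hb hK2)
  have := (Matrix.PosDef.fromBlocks₁₁ (1:Matrix ι ι ℂ) (a • M₁⁻¹ + b • M₂⁻¹) hM).mp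
  simp only [Matrix.conjTranspose_one] at this
  have h2' := this hbig
  simpa [Matrix.mul_one, Matrix.one_mul] using h2'

lemma matrix_identity {M₁ M₂ : Matrix ι ι ℂ} (h1 : M₁.PosDef) (h2 : M₂.PosDef)
    {a b : ℝ} (ha : 0 < a) (hb : 0 < b) (hab : a + b = 1)
    (hM : (a • M₁ + b • M₂).PosDef) :
    (a • M₁⁻¹ + b • M₂⁻¹ - (a • M₁ + b • M₂)⁻¹) * (a • M₁ + b • M₂)
      = (a*b) • (M₁⁻¹ * (M₂ - M₁) * (M₂⁻¹ * (M₂ - M₁))) := by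
  have hd1 : IsUnit M₁.det := (Matrix.isUnit_iff_isUnit_det _).mp h1.isUnit
  have hd2 : IsUnit M₂.det := (Matrix.isUnit_iff_isUnit_det _).mp h2.isUnit
  have hdM : IsUnit (a • M₁ + b • M₂).det := (Matrix.isUnit_iff_isUnit_det _).mp hM.isUnit
  have key1 : M₁⁻¹ * (M₂ - M₁) * M₂⁻¹ = M₁⁻¹ - M₂⁻¹ := by
    rw [Matrix.mul_sub, Matrix.nonsing_inv_mul _ hd1, Matrix.sub_mul, Matrix.one_mul,
      Matrix.mul_assoc, Matrix.mul_nonsing_inv _ hd2, Matrix.mul_one]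
  have key2 : M₁⁻¹ * (M₂ - M₁) * (M₂⁻¹ * (M₂ - M₁))
      = (M₁⁻¹ - M₂⁻¹) * (M₂ - M₁) := by
    rw [← key1]; rw [Matrix.mul_assoc, Matrix.mul_assoc, Matrix.mul_assoc]
  have key3 : (M₁⁻¹ - M₂⁻¹) * (M₂ - M₁)
      = M₁⁻¹ * M₂ + M₂⁻¹ * M₁ - (2:ℝ) • 1 := by
    rw [Matrix.sub_mul, Matrix.mul_sub, Matrix.mul_sub, Matrix.nonsing_inv_mul _ hd1,
      Matrix.nonsing_inv_mul _ hd2]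
    ext i j
    simp only [Matrix.sub_apply, Matrix.add_apply, Matrix.smul_apply, Matrix.one_apply,
      smul_ite, smul_eq_mul]
    split <;> simp [Complex.real_smul] <;> ring
  have eL : (a • M₁⁻¹ + b • M₂⁻¹ - (a • M₁ + b • M₂)⁻¹) * (a • M₁ + b • M₂)
      = a • (M₁⁻¹ * (a • M₁ + b • M₂)) + b • (M₂⁻¹ * (a • M₁ + b • M₂)) - 1 := by
    rw [Matrix.sub_mul, Matrix.add_mul, Matrix.smul_mul, Matrix.smul_mul,
      Matrix.nonsing_inv_mul _ hdM]
  have eM1 : M₁⁻¹ * (a • M₁ + b • M₂) = a • (1:Matrix ι ι ℂ) + b • (M₁⁻¹ * M₂) := by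
    rw [Matrix.mul_add, Matrix.mul_smul, Matrix.mul_smul, Matrix.nonsing_inv_mul _ hd1]
  have eM2 : M₂⁻¹ * (a • M₁ + b • M₂) = a • (M₂⁻¹ * M₁) + b • (1:Matrix ι ι ℂ) := by
    rw [Matrix.mul_add, Matrix.mul_smul, Matrix.mul_smul, Matrix.nonsing_inv_mul _ hd2]
  rw [eL, eM1, eM2, key2, key3]
  have hb' : b = 1 - a := by linarith
  subst hb'
  module

lemma gap_ne_zero {M₁ M₂ : Matrix ι ι ℂ} (h1 : M₁.PosDef) (h2 : M₂.PosDef)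
    {a b : ℝ} (ha : 0 < a) (hb : 0 < b) (hab : a + b = 1)
    (hM : (a • M₁ + b • M₂).PosDef) (hne : M₁ ≠ M₂) :
    (a • M₁⁻¹ + b • M₂⁻¹ - (a • M₁ + b • M₂)⁻¹) ≠ 0 := by
  intro h0
  have hid := matrix_identity h1 h2 ha hb hab hM
  rw [h0, Matrix.zero_mul] at hid
  have hab0 : (a*b : ℝ) ≠ 0 := by positivity
  have h3 : M₁⁻¹ * (M₂ - M₁) * (M₂⁻¹ * (M₂ - M₁)) = 0 := by
    have := hid.symm
    rwa [smul_eq_zero_iff_right hab0] at this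
  -- multiply by M₁ on the left
  have hd1 : IsUnit M₁.det := (Matrix.isUnit_iff_isUnit_det _).mp h1.isUnit
  have hd2 : IsUnit M₂.det := (Matrix.isUnit_iff_isUnit_det _).mp h2.isUnit
  have h4 : (M₂ - M₁) * (M₂⁻¹ * (M₂ - M₁)) = 0 := by
    have h5 := congrArg (fun X => M₁ * X) h3
    simp only [Matrix.mul_zero] at h5
    rwa [Matrix.mul_assoc M₁⁻¹ (M₂ - M₁) (M₂⁻¹ * (M₂ - M₁)),
      Matrix.mul_nonsing_inv_cancel_left _ _ hd1] at h5
  -- (M₂-M₁)ᴴ M₂⁻¹ (M₂-M₁) = 0 with M₂⁻¹ posdef forces M₂ - M₁ = 0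
  obtain ⟨C, hC⟩ := psd_exists_factor h2.inv.posSemidef
  have hH : (M₂ - M₁)ᴴ = M₂ - M₁ := by
    rw [Matrix.conjTranspose_sub, h2.isHermitian.eq, h1.isHermitian.eq]
  have h6 : (C * (M₂ - M₁))ᴴ * (C * (M₂ - M₁)) = 0 := by
    rw [Matrix.conjTranspose_mul, hH]
    calc (M₂ - M₁) * Cᴴ * (C * (M₂ - M₁))
        = (M₂ - M₁) * (Cᴴ * C * (M₂ - M₁)) := by
          rw [Matrix.mul_assoc, Matrix.mul_assoc]
      _ = (M₂ - M₁) * (M₂⁻¹ * (M₂ - M₁)) := by rw [← hC]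
      _ = 0 := h4
  have h7 : C * (M₂ - M₁) = 0 := Matrix.conjTranspose_mul_self_eq_zero.mp h6
  have h8 : M₂⁻¹ * (M₂ - M₁) = 0 := by
    rw [hC, Matrix.mul_assoc, h7, Matrix.mul_zero]
  have h9 : M₂ - M₁ = 0 := by
    have := congrArg (fun X => M₂ * X) h8
    simpa [Matrix.mul_nonsing_inv_cancel_left _ _ hd2] using this
  exact hne (sub_eq_zero.mp h9).symm

lemma trace_pair_nonneg {S Psi : Matrix ι ι ℂ} (hS : S.PosSemidef) (hP : Psi.PosSemidef) :
    0 ≤ (S * Psi).trace.re := (Complex.le_def.mp (psd_trace_mul_nonneg hS hP)).1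

lemma trace_pair_pos {S Psi : Matrix ι ι ℂ} (hS : S.PosSemidef) (hSne : S ≠ 0)
    {c : ℝ} (hc : 0 < c) (hP : (Psi - c • (1 : Matrix ι ι ℂ)).PosSemidef) :
    0 < (S * Psi).trace.re := by
  have hsplit : S * Psi = S * (Psi - c • 1) + c • S := by
    rw [Matrix.mul_sub, Matrix.mul_smul, Matrix.mul_one, sub_add_cancel]
  have h1 : 0 ≤ (S * (Psi - c • 1)).trace := psd_trace_mul_nonneg hS hP
  have h2 : 0 ≤ S.trace := psd_trace_nonneg' hS
  have h3 : S.trace ≠ 0 := fun h => hSne (psd_trace_eq_zero hS h)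
  have h2re : 0 < S.trace.re := by
    rcases (Complex.le_def.mp h2) with ⟨hre, him⟩
    simp only [Complex.zero_re, Complex.zero_im] at hre him
    rcases lt_or_eq_of_le hre with h | h
    · exact h
    · exact absurd (Complex.ext h.symm him.symm) h3
  have h1re : 0 ≤ (S * (Psi - c • 1)).trace.re := (Complex.le_def.mp h1).1
  rw [hsplit, Matrix.trace_add, Complex.add_re, Matrix.trace_smul, Complex.smul_re]
  have : 0 < c • S.trace.re := by simp only [smul_eq_mul]; positivity
  linarith

lemma gap_trace_formula {M₁ M₂ Psi : Matrix ι ι ℂ} {a b : ℝ} :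
    ((a • M₁⁻¹ + b • M₂⁻¹ - (a • M₁ + b • M₂)⁻¹) * Psi).trace.re
      = a * (M₁⁻¹ * Psi).trace.re + b * (M₂⁻¹ * Psi).trace.re
        - ((a • M₁ + b • M₂)⁻¹ * Psi).trace.re := by
  rw [Matrix.sub_mul, Matrix.add_mul, Matrix.smul_mul, Matrix.smul_mul,
    Matrix.trace_sub, Matrix.trace_add, Matrix.trace_smul, Matrix.trace_smul,
    Complex.sub_re, Complex.add_re, Complex.smul_re, Complex.smul_re]
  simp [smul_eq_mul]

lemma psd_of_coercive {Psi : Matrix ι ι ℂ} {c : ℝ} (hc : 0 < c)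
    (h : (Psi - c • (1 : Matrix ι ι ℂ)).PosSemidef) : Psi.PosSemidef := by
  have : Psi = (Psi - c • 1) + c • 1 := by rw [sub_add_cancel]
  rw [this]
  exact psd_add h (psd_smul hc.le Matrix.PosSemidef.one)

lemma pd_combo {M₁ M₂ : Matrix ι ι ℂ} (h1 : M₁.PosDef) (h2 : M₂.PosDef)
    {a b : ℝ} (ha : 0 ≤ a) (hb : 0 ≤ b) (hab : a + b = 1) :
    (a • M₁ + b • M₂).PosDef := by
  rcases eq_or_lt_of_le ha with h | h
  · have hb1 : b = 1 := by linarith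
    rw [← h, hb1]; simpa using h2
  · exact pd_add_psd (pd_smul h h1) (psd_smul hb h2.posSemidef)

lemma pointwise_le {M₁ M₂ Psi : Matrix ι ι ℂ} (h1 : M₁.PosDef) (h2 : M₂.PosDef)
    {a b : ℝ} (ha : 0 ≤ a) (hb : 0 ≤ b) (hab : a + b = 1)
    (hM : (a • M₁ + b • M₂).PosDef) (hP : Psi.PosSemidef) :
    ((a • M₁ + b • M₂)⁻¹ * Psi).trace.re
      ≤ a * (M₁⁻¹ * Psi).trace.re + b * (M₂⁻¹ * Psi).trace.re := by
  have hS := inv_convex_psd h1 h2 ha hb hab hM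
  have h0 := trace_pair_nonneg hS hP
  rw [gap_trace_formula] at h0
  linarith

lemma pointwise_lt {M₁ M₂ Psi : Matrix ι ι ℂ} (h1 : M₁.PosDef) (h2 : M₂.PosDef)
    {a b : ℝ} (ha : 0 < a) (hb : 0 < b) (hab : a + b = 1)
    (hM : (a • M₁ + b • M₂).PosDef) {c : ℝ} (hc : 0 < c)
    (hP : (Psi - c • (1 : Matrix ι ι ℂ)).PosSemidef) (hne : M₁ ≠ M₂) :
    ((a • M₁ + b • M₂)⁻¹ * Psi).trace.re
      < a * (M₁⁻¹ * Psi).trace.re + b * (M₂⁻¹ * Psi).trace.re := by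
  have hS := inv_convex_psd h1 h2 ha.le hb.le hab hM
  have hSne := gap_ne_zero h1 h2 ha hb hab hM hne
  have h0 := trace_pair_pos hS hSne hc hP
  rw [gap_trace_formula] at h0
  linarith

end MatrixAux


/-- Range of Γ, as a set of Hermitian matrices. -/
def RangeGamma {n m : ℕ} (A : Matrix (Fin n) (Fin n) ℂ)
    (B : Matrix (Fin n) (Fin m) ℂ) : Set (Matrix (Fin n) (Fin n) ℂ) :=
  {X | ∃ Φ : ℝ → Matrix (Fin m) (Fin m) ℂ, Continuous Φ ∧
    Function.Periodic Φ (2 * Real.pi) ∧ (∀ θ, (Φ θ).IsHermitian) ∧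
    GammaOp A B Φ = X}

/-- Normalized Lebesgue measure dθ/2π on one period, modeling the unit circle. -/
noncomputable def muT : Measure ℝ :=
  (ENNReal.ofReal (2 * Real.pi)⁻¹) • (volume.restrict (Set.Ioc 0 (2 * Real.pi)))

/-- Bounded coercive Hermitian-valued spectral density on the circle. -/
def IsSpecDens {m : ℕ} (Φ : ℝ → Matrix (Fin m) (Fin m) ℂ) : Prop :=
  (∀ i j, Measurable fun θ => Φ θ i j) ∧ Function.Periodic Φ (2 * Real.pi) ∧
  (∀ θ, (Φ θ).IsHermitian) ∧ (∃ C : ℝ, ∀ θ i j, ‖Φ θ i j‖ ≤ C) ∧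
  (∃ c : ℝ, 0 < c ∧ ∀ θ, ((Φ θ) - c • (1 : Matrix (Fin m) (Fin m) ℂ)).PosSemidef)

/-- The set L^H_Γ = {Λ Hermitian, Λ ∈ Range Γ, I + G*ΛG > 0 on 𝕋}. -/
def LHGamma {n m : ℕ} (A : Matrix (Fin n) (Fin n) ℂ)
    (B : Matrix (Fin n) (Fin m) ℂ) : Set (Matrix (Fin n) (Fin n) ℂ) :=
  {Λ | Λ.IsHermitian ∧ Λ ∈ RangeGamma A B ∧
    ∀ θ : ℝ, ((1 : Matrix (Fin m) (Fin m) ℂ) + (Gtf A B θ)ᴴ * Λ * Gtf A B θ).PosDef}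

/-- The dual functional J^H_Ψ(Λ) = tr ∫ (I + G*ΛG)⁻¹Ψ + tr(ΛΣ). -/
noncomputable def JH {n m : ℕ} (A : Matrix (Fin n) (Fin n) ℂ)
    (B : Matrix (Fin n) (Fin m) ℂ) (Ψ : ℝ → Matrix (Fin m) (Fin m) ℂ)
    (Sig : Matrix (Fin n) (Fin n) ℂ) (Λ : Matrix (Fin n) (Fin n) ℂ) : ℝ :=
  (∫ θ, ((((1 : Matrix (Fin m) (Fin m) ℂ) + (Gtf A B θ)ᴴ * Λ * Gtf A B θ)⁻¹ *
      Ψ θ).trace.re) ∂muT) + (Λ * Sig).trace.re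


section Analytic

variable {n m : ℕ} {A : Matrix (Fin n) (Fin n) ℂ} {B : Matrix (Fin n) (Fin m) ℂ}

lemma det_circle_ne (hstab : ∀ z : ℂ, (A - z • (1 : Matrix (Fin n) (Fin n) ℂ)).det = 0 →
    ‖z‖ < 1) (θ : ℝ) :
    (Complex.exp (θ * Complex.I) • (1 : Matrix (Fin n) (Fin n) ℂ) - A).det ≠ 0 := by
  intro h
  have h2 : (A - Complex.exp (θ * Complex.I) • (1 : Matrix (Fin n) (Fin n) ℂ)).det = 0 := by
    have hneg : A - Complex.exp (θ * Complex.I) • (1 : Matrix (Fin n) (Fin n) ℂ)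
        = -(Complex.exp (θ * Complex.I) • (1 : Matrix (Fin n) (Fin n) ℂ) - A) := by
      rw [neg_sub]
    rw [hneg, Matrix.det_neg, h, mul_zero]
  have h3 := hstab _ h2
  have h4 : ‖Complex.exp (θ * Complex.I)‖ = 1 := by
    rw [Complex.norm_exp]
    simp
  rw [h4] at h3
  exact lt_irrefl 1 h3

lemma continuous_Gtf (hstab : ∀ z : ℂ, (A - z • (1 : Matrix (Fin n) (Fin n) ℂ)).det = 0 →
    ‖z‖ < 1) : Continuous (Gtf A B) := by
  have hE : Continuous fun θ : ℝ =>
      Complex.exp (θ * Complex.I) • (1 : Matrix (Fin n) (Fin n) ℂ) - A := by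
    exact ((Complex.continuous_exp.comp (by fun_prop)).smul continuous_const).sub
      continuous_const
  have hinv : Continuous fun θ : ℝ =>
      (Complex.exp (θ * Complex.I) • (1 : Matrix (Fin n) (Fin n) ℂ) - A)⁻¹ := by
    have heq : (fun θ : ℝ =>
        (Complex.exp (θ * Complex.I) • (1 : Matrix (Fin n) (Fin n) ℂ) - A)⁻¹)
        = fun θ : ℝ =>
        ((Complex.exp (θ * Complex.I) • (1 : Matrix (Fin n) (Fin n) ℂ) - A).det)⁻¹ •
          (Complex.exp (θ * Complex.I) • (1 : Matrix (Fin n) (Fin n) ℂ) - A).adjugate := by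
      funext θ
      rw [Matrix.inv_def, Ring.inverse_eq_inv]
    rw [heq]
    exact (hE.matrix_det.inv₀ (det_circle_ne hstab)).smul hE.matrix_adjugate
  exact hinv.matrix_mul continuous_const

lemma periodic_Gtf : Function.Periodic (Gtf A B) (2 * Real.pi) := by
  intro θ
  unfold Gtf
  have : Complex.exp ((↑(θ + 2 * Real.pi)) * Complex.I) = Complex.exp (θ * Complex.I) := by
    push_cast
    rw [add_mul, Complex.exp_add, Complex.exp_two_pi_mul_I, mul_one]
  rw [this]

lemma isFiniteMuT : IsFiniteMeasure muT := by
  constructor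
  rw [muT, Measure.smul_apply, Measure.restrict_apply MeasurableSet.univ, Set.univ_inter,
    Real.volume_Ioc, smul_eq_mul]
  exact ENNReal.mul_lt_top ENNReal.ofReal_lt_top ENNReal.ofReal_lt_top

lemma integrable_trace_re {P : ℝ → Matrix (Fin m) (Fin m) ℂ} (hP : Continuous P)
    {Ψ : ℝ → Matrix (Fin m) (Fin m) ℂ} (hΨm : ∀ i j, Measurable fun θ => Ψ θ i j)
    {C : ℝ} (hC : ∀ θ i j, ‖Ψ θ i j‖ ≤ C) :
    Integrable (fun θ => ((P θ) * Ψ θ).trace.re) muT := by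
  have hPij : ∀ i j, Continuous fun θ => P θ i j := fun i j =>
    (continuous_apply j).comp ((continuous_apply i).comp hP)
  have hmeas : Measurable fun θ => ((P θ) * Ψ θ).trace.re := by
    apply Complex.measurable_re.comp
    have : (fun θ => ((P θ) * Ψ θ).trace)
        = fun θ => ∑ i, ∑ j, P θ i j * Ψ θ j i := by
      funext θ
      rw [Matrix.trace]
      exact Finset.sum_congr rfl fun i _ => by rw [Matrix.diag, Matrix.mul_apply]
    rw [this]
    exact Finset.measurable_sum _ fun i _ => Finset.measurable_sum _ fun j _ =>
      ((hPij i j).measurable).mul (hΨm j i)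
  -- bound on the compact interval
  have hcont : Continuous fun θ => ∑ i, ∑ j, ‖P θ i j‖ := by
    apply continuous_finset_sum _ fun i _ => continuous_finset_sum _ fun j _ => ?_
    exact continuous_norm.comp (hPij i j)
  obtain ⟨K, hK⟩ := (isCompact_Icc (a := (0:ℝ)) (b := 2 * Real.pi)).exists_bound_of_continuousOn
    hcont.continuousOn
  have hbound : ∀ θ ∈ Set.Ioc (0:ℝ) (2 * Real.pi),
      ‖((P θ) * Ψ θ).trace.re‖ ≤ ‖K‖ * |C| := by
    intro θ hθ
    have hKθ := hK θ (Set.Ioc_subset_Icc_self hθ)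
    rw [Real.norm_eq_abs] at hKθ ⊢
    have h1 : |((P θ) * Ψ θ).trace.re| ≤ ‖((P θ) * Ψ θ).trace‖ :=
      Complex.abs_re_le_norm _
    have h2 : ‖((P θ) * Ψ θ).trace‖
        ≤ ∑ i, ∑ j, ‖P θ i j‖ * |C| := by
      rw [Matrix.trace]
      refine (norm_sum_le _ _).trans ?_
      refine Finset.sum_le_sum fun i _ => ?_
      rw [Matrix.diag, Matrix.mul_apply]
      refine (norm_sum_le _ _).trans ?_
      refine Finset.sum_le_sum fun j _ => ?_
      rw [norm_mul]
      have hC' : ‖Ψ θ j i‖ ≤ |C| := (hC θ j i).trans (le_abs_self C)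
      exact mul_le_mul_of_nonneg_left hC' (norm_nonneg _)
    have h3 : ∑ i, ∑ j, ‖P θ i j‖ * |C|
        = (∑ i, ∑ j, ‖P θ i j‖) * |C| := by
      rw [Finset.sum_mul]
      exact Finset.sum_congr rfl fun i _ => by rw [Finset.sum_mul]
    have h4 : (∑ i, ∑ j, ‖P θ i j‖) * |C| ≤ |K| * |C| := by
      apply mul_le_mul_of_nonneg_right _ (abs_nonneg C)
      calc (∑ i, ∑ j, ‖P θ i j‖)
          ≤ |∑ i, ∑ j, ‖P θ i j‖| := le_abs_self _
        _ ≤ |K| := hKθ.trans (le_abs_self K)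
    calc |((P θ) * Ψ θ).trace.re| ≤ ‖((P θ) * Ψ θ).trace‖ := h1
      _ ≤ ∑ i, ∑ j, ‖P θ i j‖ * |C| := h2
      _ = (∑ i, ∑ j, ‖P θ i j‖) * |C| := h3
      _ ≤ |K| * |C| := h4
  haveI := isFiniteMuT
  refine Integrable.mono' (integrable_const (‖K‖ * |C|)) hmeas.aestronglyMeasurable ?_
  rw [muT]
  exact Measure.ae_smul_measure
    ((ae_restrict_iff' measurableSet_Ioc).mpr (ae_of_all _ hbound)) _

lemma continuous_minv {P : ℝ → Matrix (Fin m) (Fin m) ℂ} (hP : Continuous P)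
    (hpd : ∀ θ, (P θ).PosDef) : Continuous fun θ => (P θ)⁻¹ := by
  have heq : (fun θ => (P θ)⁻¹) = fun θ => ((P θ).det)⁻¹ • (P θ).adjugate := by
    funext θ
    rw [Matrix.inv_def, Ring.inverse_eq_inv]
  rw [heq]
  exact (hP.matrix_det.inv₀ fun θ => (hpd θ).det_pos.ne').smul hP.matrix_adjugate

end Analytic

section Gamma

variable {n m : ℕ} {A : Matrix (Fin n) (Fin n) ℂ} {B : Matrix (Fin n) (Fin m) ℂ}

lemma continuous_sandwich (hstab : ∀ z : ℂ, (A - z • (1 : Matrix (Fin n) (Fin n) ℂ)).det = 0 →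
    ‖z‖ < 1) {Φ : ℝ → Matrix (Fin m) (Fin m) ℂ} (hΦ : Continuous Φ) :
    Continuous fun θ => (Gtf A B θ) * (Φ θ) * (Gtf A B θ)ᴴ := by
  have hGc := continuous_Gtf (B := B) hstab
  exact (hGc.matrix_mul hΦ).matrix_mul hGc.matrix_conjTranspose

lemma gamma_comb (hstab : ∀ z : ℂ, (A - z • (1 : Matrix (Fin n) (Fin n) ℂ)).det = 0 →
    ‖z‖ < 1) {Φ₁ Φ₂ : ℝ → Matrix (Fin m) (Fin m) ℂ}
    (h1 : Continuous Φ₁) (h2 : Continuous Φ₂) (a b : ℝ) :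
    GammaOp A B (fun θ => a • Φ₁ θ + b • Φ₂ θ)
      = a • GammaOp A B Φ₁ + b • GammaOp A B Φ₂ := by
  have hc1 := continuous_sandwich (B := B) hstab h1
  have hc2 := continuous_sandwich (B := B) hstab h2
  ext i j
  have hint : ∀ θ, ((Gtf A B θ) * (a • Φ₁ θ + b • Φ₂ θ) * (Gtf A B θ)ᴴ) i j
      = a • (((Gtf A B θ) * (Φ₁ θ) * (Gtf A B θ)ᴴ) i j)
        + b • (((Gtf A B θ) * (Φ₂ θ) * (Gtf A B θ)ᴴ) i j) := by
    intro θ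
    have : (Gtf A B θ) * (a • Φ₁ θ + b • Φ₂ θ) * (Gtf A B θ)ᴴ
        = a • ((Gtf A B θ) * (Φ₁ θ) * (Gtf A B θ)ᴴ)
          + b • ((Gtf A B θ) * (Φ₂ θ) * (Gtf A B θ)ᴴ) := by
      rw [Matrix.mul_add, Matrix.add_mul, Matrix.mul_smul, Matrix.mul_smul,
        Matrix.smul_mul, Matrix.smul_mul]
    rw [this, Matrix.add_apply, Matrix.smul_apply, Matrix.smul_apply]
  have hi1 : IntervalIntegrable (fun θ => ((Gtf A B θ) * (Φ₁ θ) * (Gtf A B θ)ᴴ) i j)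
      volume 0 (2 * Real.pi) :=
    (((continuous_apply j).comp ((continuous_apply i).comp hc1))).intervalIntegrable _ _
  have hi2 : IntervalIntegrable (fun θ => ((Gtf A B θ) * (Φ₂ θ) * (Gtf A B θ)ᴴ) i j)
      volume 0 (2 * Real.pi) :=
    (((continuous_apply j).comp ((continuous_apply i).comp hc2))).intervalIntegrable _ _
  show (∫ θ in (0:ℝ)..(2 * Real.pi),
      ((Gtf A B θ) * (a • Φ₁ θ + b • Φ₂ θ) * (Gtf A B θ)ᴴ) i j) / (2 * Real.pi)
    = (a • GammaOp A B Φ₁ + b • GammaOp A B Φ₂) i j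
  have hi1' : IntervalIntegrable (fun θ => a • (((Gtf A B θ) * (Φ₁ θ) * (Gtf A B θ)ᴴ) i j))
      volume 0 (2 * Real.pi) := by exact hi1.smul a
  have hi2' : IntervalIntegrable (fun θ => b • (((Gtf A B θ) * (Φ₂ θ) * (Gtf A B θ)ᴴ) i j))
      volume 0 (2 * Real.pi) := by exact hi2.smul b
  rw [show (fun θ => ((Gtf A B θ) * (a • Φ₁ θ + b • Φ₂ θ) * (Gtf A B θ)ᴴ) i j)
      = fun θ => a • (((Gtf A B θ) * (Φ₁ θ) * (Gtf A B θ)ᴴ) i j)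
        + b • (((Gtf A B θ) * (Φ₂ θ) * (Gtf A B θ)ᴴ) i j) from funext hint]
  rw [intervalIntegral.integral_add hi1' hi2',
    intervalIntegral.integral_smul, intervalIntegral.integral_smul]
  rw [Matrix.add_apply, Matrix.smul_apply, Matrix.smul_apply]
  unfold GammaOp
  rw [Complex.real_smul, Complex.real_smul, Complex.real_smul, Complex.real_smul]
  ring

lemma gamma_sub (hstab : ∀ z : ℂ, (A - z • (1 : Matrix (Fin n) (Fin n) ℂ)).det = 0 →
    ‖z‖ < 1) {Φ₁ Φ₂ : ℝ → Matrix (Fin m) (Fin m) ℂ}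
    (h1 : Continuous Φ₁) (h2 : Continuous Φ₂) :
    GammaOp A B (fun θ => Φ₁ θ - Φ₂ θ) = GammaOp A B Φ₁ - GammaOp A B Φ₂ := by
  have h := gamma_comb (B := B) hstab h1 h2 1 (-1)
  have heq : (fun θ => (1:ℝ) • Φ₁ θ + (-1:ℝ) • Φ₂ θ) = fun θ => Φ₁ θ - Φ₂ θ := by
    funext θ; simp [sub_eq_add_neg]
  rw [heq] at h
  rw [h]
  simp [sub_eq_add_neg]

lemma trace_gamma (hstab : ∀ z : ℂ, (A - z • (1 : Matrix (Fin n) (Fin n) ℂ)).det = 0 →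
    ‖z‖ < 1) {Φ : ℝ → Matrix (Fin m) (Fin m) ℂ} (hΦ : Continuous Φ)
    (Δ : Matrix (Fin n) (Fin n) ℂ) :
    (Δ * GammaOp A B Φ).trace
      = (∫ θ in (0:ℝ)..(2 * Real.pi),
          ((Gtf A B θ)ᴴ * Δ * Gtf A B θ * Φ θ).trace) / (2 * Real.pi) := by
  have hcF := continuous_sandwich (B := B) hstab hΦ
  have hcont2 : ∀ (i j : Fin n),
      Continuous fun θ => Δ i j * ((Gtf A B θ) * (Φ θ) * (Gtf A B θ)ᴴ) j i := fun i j =>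
    continuous_const.mul ((continuous_apply i).comp ((continuous_apply j).comp hcF))
  have step2 : ∀ i j : Fin n, Δ i j * GammaOp A B Φ j i
      = (∫ θ in (0:ℝ)..(2 * Real.pi),
          Δ i j * ((Gtf A B θ) * (Φ θ) * (Gtf A B θ)ᴴ) j i) / (2 * Real.pi) := by
    intro i j
    unfold GammaOp
    rw [intervalIntegral.integral_const_mul, mul_div_assoc]
  have tid : ∀ θ : ℝ, (∑ i, ∑ j, Δ i j * ((Gtf A B θ) * (Φ θ) * (Gtf A B θ)ᴴ) j i)
      = ((Gtf A B θ)ᴴ * Δ * Gtf A B θ * Φ θ).trace := by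
    intro θ
    have lhs_eq : (∑ i, ∑ j, Δ i j * ((Gtf A B θ) * (Φ θ) * (Gtf A B θ)ᴴ) j i)
        = (Δ * ((Gtf A B θ) * (Φ θ) * (Gtf A B θ)ᴴ)).trace := by
      rw [Matrix.trace]
      exact (Finset.sum_congr rfl fun i _ => by rw [Matrix.diag, Matrix.mul_apply]).symm
    rw [lhs_eq]
    have e1 : (Gtf A B θ)ᴴ * Δ * Gtf A B θ * Φ θ
        = (Gtf A B θ)ᴴ * (Δ * (Gtf A B θ * Φ θ)) := by
      rw [Matrix.mul_assoc, Matrix.mul_assoc]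
    rw [e1, Matrix.trace_mul_comm ((Gtf A B θ)ᴴ) (Δ * (Gtf A B θ * Φ θ)),
      Matrix.mul_assoc Δ (Gtf A B θ * Φ θ) ((Gtf A B θ)ᴴ)]
  calc (Δ * GammaOp A B Φ).trace
      = ∑ i, ∑ j, Δ i j * GammaOp A B Φ j i := by
        rw [Matrix.trace]
        exact Finset.sum_congr rfl fun i _ => by rw [Matrix.diag, Matrix.mul_apply]
    _ = ∑ i, ∑ j, (∫ θ in (0:ℝ)..(2 * Real.pi),
          Δ i j * ((Gtf A B θ) * (Φ θ) * (Gtf A B θ)ᴴ) j i) / (2 * Real.pi) :=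
        Finset.sum_congr rfl fun i _ => Finset.sum_congr rfl fun j _ => step2 i j
    _ = (∑ i, ∑ j, ∫ θ in (0:ℝ)..(2 * Real.pi),
          Δ i j * ((Gtf A B θ) * (Φ θ) * (Gtf A B θ)ᴴ) j i) / (2 * Real.pi) := by
        simp only [← Finset.sum_div]
    _ = (∑ i, ∫ θ in (0:ℝ)..(2 * Real.pi), ∑ j,
          Δ i j * ((Gtf A B θ) * (Φ θ) * (Gtf A B θ)ᴴ) j i) / (2 * Real.pi) := by
        congr 1
        exact Finset.sum_congr rfl fun i _ =>
          (intervalIntegral.integral_finset_sum (fun j _ =>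
            ((hcont2 i j).intervalIntegrable _ _))).symm
    _ = (∫ θ in (0:ℝ)..(2 * Real.pi), ∑ i, ∑ j,
          Δ i j * ((Gtf A B θ) * (Φ θ) * (Gtf A B θ)ᴴ) j i) / (2 * Real.pi) := by
        congr 1
        exact (intervalIntegral.integral_finset_sum (fun i _ =>
          (continuous_finset_sum _ fun j _ => hcont2 i j).intervalIntegrable _ _)).symm
    _ = (∫ θ in (0:ℝ)..(2 * Real.pi),
          ((Gtf A B θ)ᴴ * Δ * Gtf A B θ * Φ θ).trace) / (2 * Real.pi) := by
        congr 1
        exact intervalIntegral.integral_congr fun θ _ => tid θ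

lemma gamma_vanish (hstab : ∀ z : ℂ, (A - z • (1 : Matrix (Fin n) (Fin n) ℂ)).det = 0 →
    ‖z‖ < 1) {Δ : Matrix (Fin n) (Fin n) ℂ} (hH : Δ.IsHermitian)
    {Φ : ℝ → Matrix (Fin m) (Fin m) ℂ} (hΦ : Continuous Φ)
    (heq : GammaOp A B Φ = Δ)
    (hz : ∀ θ : ℝ, (Gtf A B θ)ᴴ * Δ * Gtf A B θ = 0) : Δ = 0 := by
  have ht := trace_gamma (B := B) hstab hΦ Δ
  rw [heq] at ht
  have hzero : (Δ * Δ).trace = 0 := by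
    rw [ht]
    have : ∀ θ : ℝ, ((Gtf A B θ)ᴴ * Δ * Gtf A B θ * Φ θ).trace = 0 := by
      intro θ; rw [hz θ, Matrix.zero_mul, Matrix.trace_zero]
    rw [intervalIntegral.integral_congr (fun θ _ => this θ)]
    simp
  have hzero2 : (Δᴴ * Δ).trace = 0 := by rw [hH.eq]; exact hzero
  have hpsd := Matrix.posSemidef_conjTranspose_mul_self Δ
  have := psd_trace_eq_zero hpsd hzero2
  exact Matrix.conjTranspose_mul_self_eq_zero.mp this

lemma exists_neighborhood {X : Type*} [TopologicalSpace X] [T1Space X]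
    {f : ℝ → X} (hf : Continuous f)
    (hper : Function.Periodic f (2 * Real.pi)) {θ₀ : ℝ} {v : X} (h0 : f θ₀ ≠ v) :
    ∃ θ₁ δ : ℝ, 0 < δ ∧ Set.Ioo (θ₁ - δ) θ₁ ⊆ Set.Ioc 0 (2 * Real.pi) ∧
      ∀ θ ∈ Set.Ioo (θ₁ - δ) θ₁, f θ ≠ v := by
  obtain ⟨y, hy, hval⟩ := hper.exists_mem_Ioc Real.two_pi_pos θ₀ 0
  rw [zero_add] at hy
  have hfy : f y ≠ v := by rw [← hval]; exact h0
  have hopen : IsOpen {θ : ℝ | f θ ≠ v} := by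
    have : {θ : ℝ | f θ ≠ v} = f ⁻¹' {v}ᶜ := rfl
    rw [this]
    exact (isClosed_singleton.isOpen_compl).preimage hf
  obtain ⟨ε, hε, hball⟩ := Metric.isOpen_iff.mp hopen y hfy
  refine ⟨y, min ε y, lt_min hε hy.1, ?_, ?_⟩
  · intro x hx
    constructor
    · have : y - min ε y ≥ y - y := by
        have := min_le_right ε y; linarith
      calc (0:ℝ) = y - y := by ring
        _ ≤ y - min ε y := this
        _ < x := hx.1
    · exact le_of_lt (lt_of_lt_of_le hx.2 hy.2)
  · intro x hx
    apply hball
    rw [Metric.mem_ball, Real.dist_eq, abs_of_neg (by linarith [hx.2] : x - y < 0)]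
    have := min_le_left ε y
    linarith [hx.1]

end Gamma


lemma affine_comb {n m : ℕ} {A : Matrix (Fin n) (Fin n) ℂ} {B : Matrix (Fin n) (Fin m) ℂ}
    (Λ₁ Λ₂ : Matrix (Fin n) (Fin n) ℂ) {a b : ℝ} (hab : a + b = 1) (θ : ℝ) :
    (1 : Matrix (Fin m) (Fin m) ℂ) + (Gtf A B θ)ᴴ * (a • Λ₁ + b • Λ₂) * Gtf A B θ
      = a • ((1 : Matrix (Fin m) (Fin m) ℂ) + (Gtf A B θ)ᴴ * Λ₁ * Gtf A B θ)
        + b • ((1 : Matrix (Fin m) (Fin m) ℂ) + (Gtf A B θ)ᴴ * Λ₂ * Gtf A B θ) := by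
  have e1 : (Gtf A B θ)ᴴ * (a • Λ₁ + b • Λ₂) * Gtf A B θ
      = a • ((Gtf A B θ)ᴴ * Λ₁ * Gtf A B θ) + b • ((Gtf A B θ)ᴴ * Λ₂ * Gtf A B θ) := by
    rw [Matrix.mul_add, Matrix.add_mul, Matrix.mul_smul, Matrix.mul_smul,
      Matrix.smul_mul, Matrix.smul_mul]
  rw [e1]
  have hb' : b = 1 - a := by linarith
  subst hb'
  module

theorem stmt_14 {n m : ℕ} (A : Matrix (Fin n) (Fin n) ℂ) (B : Matrix (Fin n) (Fin m) ℂ)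
    (hstab : ∀ z : ℂ, (A - z • (1 : Matrix (Fin n) (Fin n) ℂ)).det = 0 → ‖z‖ < 1)
    (hB : B.rank = m)
    (hreach : ∀ x : Fin n → ℂ, (∀ k : ℕ, Matrix.vecMul x (A ^ k * B) = 0) → x = 0)
    (Ψ : ℝ → Matrix (Fin m) (Fin m) ℂ) (hΨ : IsSpecDens Ψ)
    (Sig : Matrix (Fin n) (Fin n) ℂ) (hSig : Sig.PosDef) (hSigR : Sig ∈ RangeGamma A B) :
    StrictConvexOn ℝ (LHGamma A B) (JH A B Ψ Sig) := by
  obtain ⟨hΨmeas, hΨper, hΨherm, ⟨C, hC⟩, ⟨c, hc, hcoer⟩⟩ := hΨ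
  have hGc : Continuous (Gtf A B) := continuous_Gtf hstab
  -- convexity of the feasible set
  have hconv : Convex ℝ (LHGamma A B) := by
    intro Λ₁ h₁ Λ₂ h₂ a b ha hb hab
    obtain ⟨hH₁, ⟨Φ₁, hc₁, hp₁, hh₁, he₁⟩, hpd₁⟩ := h₁
    obtain ⟨hH₂, ⟨Φ₂, hc₂, hp₂, hh₂, he₂⟩, hpd₂⟩ := h₂
    refine ⟨(herm_smul hH₁).add (herm_smul hH₂),
      ⟨fun θ => a • Φ₁ θ + b • Φ₂ θ, ?_, ?_, ?_, ?_⟩, ?_⟩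
    · exact (hc₁.const_smul a).add (hc₂.const_smul b)
    · intro θ; simp only [hp₁ θ, hp₂ θ]
    · intro θ; exact (herm_smul (hh₁ θ)).add (herm_smul (hh₂ θ))
    · rw [gamma_comb hstab hc₁ hc₂ a b, he₁, he₂]
    · intro θ
      rw [affine_comb Λ₁ Λ₂ hab θ]
      exact pd_combo (hpd₁ θ) (hpd₂ θ) ha hb hab
  refine ⟨hconv, ?_⟩
  intro Λ₁ h₁ Λ₂ h₂ hne a b ha hb hab
  have hmemc : a • Λ₁ + b • Λ₂ ∈ LHGamma A B := hconv h₁ h₂ ha.le hb.le hab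
  obtain ⟨hH₁, ⟨Φ₁, hc₁, hp₁, hh₁, he₁⟩, hpd₁⟩ := h₁
  obtain ⟨hH₂, ⟨Φ₂, hc₂, hp₂, hh₂, he₂⟩, hpd₂⟩ := h₂
  set M₁ : ℝ → Matrix (Fin m) (Fin m) ℂ :=
    fun θ => (1 : Matrix (Fin m) (Fin m) ℂ) + (Gtf A B θ)ᴴ * Λ₁ * Gtf A B θ with hM₁def
  set M₂ : ℝ → Matrix (Fin m) (Fin m) ℂ :=
    fun θ => (1 : Matrix (Fin m) (Fin m) ℂ) + (Gtf A B θ)ᴴ * Λ₂ * Gtf A B θ with hM₂def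
  have haff : ∀ θ : ℝ, (1 : Matrix (Fin m) (Fin m) ℂ)
      + (Gtf A B θ)ᴴ * (a • Λ₁ + b • Λ₂) * Gtf A B θ = a • M₁ θ + b • M₂ θ :=
    fun θ => affine_comb Λ₁ Λ₂ hab θ
  -- continuity facts
  have hcM₁ : Continuous M₁ :=
    continuous_const.add ((hGc.matrix_conjTranspose.matrix_mul continuous_const).matrix_mul hGc)
  have hcM₂ : Continuous M₂ :=
    continuous_const.add ((hGc.matrix_conjTranspose.matrix_mul continuous_const).matrix_mul hGc)
  have hpdc : ∀ θ, (a • M₁ θ + b • M₂ θ).PosDef :=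
    fun θ => pd_combo (hpd₁ θ) (hpd₂ θ) ha.le hb.le hab
  have hinv₁ : Continuous fun θ => (M₁ θ)⁻¹ := continuous_minv hcM₁ hpd₁
  have hinv₂ : Continuous fun θ => (M₂ θ)⁻¹ := continuous_minv hcM₂ hpd₂
  have hinvc : Continuous fun θ => (a • M₁ θ + b • M₂ θ)⁻¹ :=
    continuous_minv ((hcM₁.const_smul a).add (hcM₂.const_smul b)) hpdc
  -- integrands
  have hg₁ : Integrable (fun θ => ((M₁ θ)⁻¹ * Ψ θ).trace.re) muT :=
    integrable_trace_re hinv₁ hΨmeas hC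
  have hg₂ : Integrable (fun θ => ((M₂ θ)⁻¹ * Ψ θ).trace.re) muT :=
    integrable_trace_re hinv₂ hΨmeas hC
  have hgc : Integrable (fun θ => ((a • M₁ θ + b • M₂ θ)⁻¹ * Ψ θ).trace.re) muT :=
    integrable_trace_re hinvc hΨmeas hC
  -- Ψ pointwise psd
  have hΨpsd : ∀ θ, (Ψ θ).PosSemidef := fun θ => psd_of_coercive hc (hcoer θ)
  -- the deficiency function
  set F : ℝ → ℝ := fun θ => a * ((M₁ θ)⁻¹ * Ψ θ).trace.re
      + b * ((M₂ θ)⁻¹ * Ψ θ).trace.re - ((a • M₁ θ + b • M₂ θ)⁻¹ * Ψ θ).trace.re with hFdef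
  have hF0 : ∀ θ, 0 ≤ F θ := by
    intro θ
    have := pointwise_le (hpd₁ θ) (hpd₂ θ) ha.le hb.le hab (hpdc θ) (hΨpsd θ)
    simp only [hFdef]
    linarith
  have hg12 : Integrable (fun θ => a * ((M₁ θ)⁻¹ * Ψ θ).trace.re
      + b * ((M₂ θ)⁻¹ * Ψ θ).trace.re) muT := by
    exact (hg₁.const_mul a).add (hg₂.const_mul b)
  have hFint : Integrable F muT := by
    simp only [hFdef]
    exact hg12.sub hgc
  -- Δ ≠ 0 gives a point where G* Δ G ≠ 0
  set Δ : Matrix (Fin n) (Fin n) ℂ := Λ₁ - Λ₂ with hΔdef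
  have hΔne : Δ ≠ 0 := sub_ne_zero.mpr hne
  have hΔH : Δ.IsHermitian := hH₁.sub hH₂
  have hΔΓ : GammaOp A B (fun θ => Φ₁ θ - Φ₂ θ) = Δ := by
    rw [gamma_sub hstab hc₁ hc₂, he₁, he₂]
  set f : ℝ → Matrix (Fin m) (Fin m) ℂ := fun θ => (Gtf A B θ)ᴴ * Δ * Gtf A B θ with hfdef
  have hfc : Continuous f :=
    (hGc.matrix_conjTranspose.matrix_mul continuous_const).matrix_mul hGc
  have hfper : Function.Periodic f (2 * Real.pi) := by
    intro θ
    simp only [hfdef, periodic_Gtf θ]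
  have hθ₀ : ∃ θ₀ : ℝ, f θ₀ ≠ 0 := by
    by_contra h
    push_neg at h
    exact hΔne (gamma_vanish hstab hΔH (hc₁.sub hc₂) hΔΓ h)
  obtain ⟨θ₀, hθ₀⟩ := hθ₀
  obtain ⟨θ₁, δ, hδ, hsub, hne'⟩ := exists_neighborhood hfc hfper hθ₀
  -- on the interval, M₁ θ ≠ M₂ θ, so F is strictly positive there
  have hFpos : ∀ θ ∈ Set.Ioo (θ₁ - δ) θ₁, 0 < F θ := by
    intro θ hθ
    have hMne : M₁ θ ≠ M₂ θ := by
      intro hEq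
      apply hne' θ hθ
      simp only [hfdef, hΔdef]
      have : (Gtf A B θ)ᴴ * (Λ₁ - Λ₂) * Gtf A B θ = M₁ θ - M₂ θ := by
        simp only [hM₁def, hM₂def]
        rw [Matrix.mul_sub, Matrix.sub_mul]
        abel
      rw [this, hEq, sub_self]
    have := pointwise_lt (hpd₁ θ) (hpd₂ θ) ha hb hab (hpdc θ) hc (hcoer θ) hMne
    simp only [hFdef]
    linarith
  -- positivity of the integral
  have hIoo : Set.Ioo (θ₁ - δ) θ₁ ⊆ Function.support F := fun θ hθ => (hFpos θ hθ).ne'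
  have hμpos : 0 < muT (Function.support F) := by
    refine lt_of_lt_of_le ?_ (measure_mono hIoo)
    rw [muT, Measure.smul_apply, Measure.restrict_apply measurableSet_Ioo,
      Set.inter_eq_self_of_subset_left hsub, Real.volume_Ioo, smul_eq_mul]
    apply ENNReal.mul_pos
    · simp only [ne_eq, ENNReal.ofReal_eq_zero, not_le]
      positivity
    · simp only [ne_eq, ENNReal.ofReal_eq_zero, not_le]
      linarith
  have hIpos : 0 < ∫ θ, F θ ∂muT :=
    (integral_pos_iff_support_of_nonneg hF0 hFint).mpr hμpos
  -- expand the integral of F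
  have hIF : ∫ θ, F θ ∂muT = a * (∫ θ, ((M₁ θ)⁻¹ * Ψ θ).trace.re ∂muT)
      + b * (∫ θ, ((M₂ θ)⁻¹ * Ψ θ).trace.re ∂muT)
      - ∫ θ, ((a • M₁ θ + b • M₂ θ)⁻¹ * Ψ θ).trace.re ∂muT := by
    rw [hFdef]
    rw [integral_sub hg12 hgc, integral_add (hg₁.const_mul a) (hg₂.const_mul b),
      integral_const_mul, integral_const_mul]
  -- linear term
  have hlin : ((a • Λ₁ + b • Λ₂) * Sig).trace.re
      = a * (Λ₁ * Sig).trace.re + b * (Λ₂ * Sig).trace.re := by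
    rw [Matrix.add_mul, Matrix.smul_mul, Matrix.smul_mul, Matrix.trace_add,
      Matrix.trace_smul, Matrix.trace_smul, Complex.add_re, Complex.smul_re,
      Complex.smul_re, smul_eq_mul, smul_eq_mul]
  -- final assembly
  have hJC : JH A B Ψ Sig (a • Λ₁ + b • Λ₂)
      = (∫ θ, ((a • M₁ θ + b • M₂ θ)⁻¹ * Ψ θ).trace.re ∂muT)
        + ((a • Λ₁ + b • Λ₂) * Sig).trace.re := by
    unfold JH
    congr 1
    apply integral_congr_ae
    filter_upwards with θ
    rw [haff θ]
  have hJ1 : JH A B Ψ Sig Λ₁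
      = (∫ θ, ((M₁ θ)⁻¹ * Ψ θ).trace.re ∂muT) + (Λ₁ * Sig).trace.re := rfl
  have hJ2 : JH A B Ψ Sig Λ₂
      = (∫ θ, ((M₂ θ)⁻¹ * Ψ θ).trace.re ∂muT) + (Λ₂ * Sig).trace.re := rfl
  rw [smul_eq_mul, smul_eq_mul, hJC, hJ1, hJ2, hlin]
  nlinarith [hIpos, hIF]
end
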